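/- Let X be a real vector space of finite dimension d and let P be a subset of X. Define conv_0(P) = P and, for each k, conv_{k+1}(P) = { (1-t)·p + t·p' : t ∈ [0,1], p, p' ∈ conv_k(P) }. Then conv_d(P) equals the convex hull of P. -/

import Mathlib

/-- The iterated "segments between pairs of points" operator:
`convIter 0 P = P` and
`convIter (k+1) P = {(1-t)•p + t•p' : t ∈ [0,1], p, p' ∈ convIter k P}`. -/
def convIter {X : Type*} [AddCommGroup X] [Module ℝ X] : ℕ → Set X → Set X
  | 0, P => P
  | (k + 1), P =>
      {x | ∃ t ∈ Set.Icc (0 : ℝ) 1, ∃ p ∈ convIter k P, ∃ p' ∈ convIter k P,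
        x = (1 - t) • p + t • p'}

lemma convIter_subset_succ {X : Type*} [AddCommGroup X] [Module ℝ X] (k : ℕ) (P : Set X) :
    convIter k P ⊆ convIter (k + 1) P := by
  intro x hx
  exact ⟨0, ⟨le_refl 0, zero_le_one⟩, x, hx, x, hx, by simp⟩

lemma convIter_subset_convexHull {X : Type*} [AddCommGroup X] [Module ℝ X] (k : ℕ) (P : Set X) :
    convIter k P ⊆ convexHull ℝ P := by
  induction k with
  | zero => exact subset_convexHull ℝ P
  | succ k ih =>
    rintro x ⟨t, ⟨ht0, ht1⟩, p, hp, p', hp', rfl⟩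
    exact (convex_convexHull ℝ P) (ih hp) (ih hp') (by linarith) ht0 (by ring)

lemma convexHull_finset_subset_convIter {X : Type*} [AddCommGroup X] [Module ℝ X]
    (P : Set X) : ∀ k (t : Finset X), ↑t ⊆ P → t.card ≤ 2 ^ k →
    convexHull ℝ (t : Set X) ⊆ convIter k P := by
  intro k
  induction k with
  | zero =>
    intro t htP htc
    simp only [pow_zero] at htc
    rcases Finset.card_le_one_iff_subset_singleton.1 htc with ⟨a, ha⟩
    rcases Finset.subset_singleton_iff.1 ha with rfl | rfl
    · simp
    · simp only [Finset.coe_singleton, convexHull_singleton]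
      intro x hx
      rcases hx with rfl
      exact htP (by simp)
  | succ k ih =>
    intro t htP htc
    classical
    by_cases hle : t.card ≤ 2 ^ k
    · exact (ih t htP hle).trans (convIter_subset_succ k P)
    push_neg at hle
    obtain ⟨t1, ht1sub, ht1card⟩ := Finset.exists_subset_card_eq hle.le
    set t2 := t \ t1 with ht2def
    have htu : (t : Set X) = ↑t1 ∪ ↑t2 := by
      rw [ht2def, Finset.coe_sdiff]
      rw [Set.union_diff_cancel (by exact_mod_cast ht1sub)]
    have ht1ne : (t1 : Set X).Nonempty := by
      rw [Finset.coe_nonempty, ← Finset.card_pos, ht1card]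
      positivity
    have ht2ne : (t2 : Set X).Nonempty := by
      rw [Finset.coe_nonempty, ← Finset.card_pos, ht2def, Finset.card_sdiff_of_subset ht1sub, ht1card]
      omega
    have h1 : convexHull ℝ (t1 : Set X) ⊆ convIter k P :=
      ih t1 ((Finset.coe_subset.2 ht1sub).trans htP) (le_of_eq ht1card)
    have h2 : convexHull ℝ (t2 : Set X) ⊆ convIter k P := by
      apply ih t2 ((Finset.coe_subset.2 (Finset.sdiff_subset)).trans htP)
      rw [ht2def, Finset.card_sdiff_of_subset ht1sub, ht1card]
      have : t.card ≤ 2 ^ (k + 1) := htc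
      omega
    intro x hx
    rw [htu, convexHull_union ht1ne ht2ne, mem_convexJoin] at hx
    obtain ⟨a, ha, b, hb, hseg⟩ := hx
    rw [segment_eq_image] at hseg
    obtain ⟨θ, hθ, rfl⟩ := hseg
    exact ⟨θ, hθ, a, h1 ha, b, h2 hb, rfl⟩

/-- If `X` is a real vector space of finite dimension `d` and `P ⊆ X`,
`convIter d P` equals the convex hull of `P`. -/
theorem convIter_finrank_eq_convexHull {X : Type*} [AddCommGroup X] [Module ℝ X]
    [FiniteDimensional ℝ X] (P : Set X) :
    convIter (Module.finrank ℝ X) P = convexHull ℝ P := by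
  apply Set.Subset.antisymm (convIter_subset_convexHull _ P)
  rw [convexHull_eq_union (𝕜 := ℝ) (s := P)]
  intro x hx
  simp only [Set.mem_iUnion] at hx
  obtain ⟨t, htP, hai, hxt⟩ := hx
  apply convexHull_finset_subset_convIter P (Module.finrank ℝ X) t htP _ hxt
  have hcard : t.card ≤ Module.finrank ℝ X + 1 := by
    have := hai.card_le_finrank_succ
    rw [Fintype.card_coe] at this
    exact this.trans (by
      have := Submodule.finrank_le (vectorSpan ℝ (Set.range ((↑) : t → X)))
      omega)
  exact hcard.trans (Nat.succ_le_of_lt (Nat.lt_two_pow_self))
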